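/- Under the assumptions of the previous differentiability lemma, together with: for all x ∈ I₂, t ↦ φ_t^{-1}(x) is twice differentiable and for every compact B ⊂ Θ, E[sup_{t∈B} |∂²φ_t^{-1}∘φ_θ(ε)|²] < ∞, the function M is twice continuously differentiable on Θ and M''(t) = 2E[(∂φ_t^{-1}(X))²] − 2E[∂²φ_t^{-1}(X)(ε − φ_t^{-1}(X))]. -/

import Mathlib

open MeasureTheory Set Filter Metric Topology

lemma aux_mul_int {Ω : Type*} [MeasurableSpace Ω] {ℙ : Measure Ω}
    {f g : Ω → ℝ} (hf : MemLp f 2 ℙ) (hg : MemLp g 2 ℙ) :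
    Integrable (fun ω => f ω * g ω) ℙ := by
  have h := hg.smul (r := 1) hf
  rw [← memLp_one_iff_integrable]
  exact h

lemma aux_asm_of_pow {Ω : Type*} [MeasurableSpace Ω] {ℙ : Measure Ω}
    {g : Ω → ℝ} {n : ℕ} (hn : n ≠ 0) (hg : ∀ ω, 0 ≤ g ω)
    (h : AEStronglyMeasurable (fun ω => g ω ^ n) ℙ) :
    AEStronglyMeasurable g ℙ := by
  have h2 : AEMeasurable (fun ω => (g ω ^ n) ^ ((n : ℝ)⁻¹)) ℙ :=
    (Real.continuous_rpow_const (inv_nonneg.mpr (Nat.cast_nonneg n))).measurable.comp_aemeasurable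
      h.aemeasurable
  have heq : (fun ω => (g ω ^ n) ^ ((n : ℝ)⁻¹)) = g := by
    funext ω
    rw [← Real.rpow_natCast (g ω) n, ← Real.rpow_mul (hg ω),
      mul_inv_cancel₀ (by exact_mod_cast hn), Real.rpow_one]
  rw [heq] at h2
  exact h2.aestronglyMeasurable

lemma aux_asm_deriv {Ω : Type*} [MeasurableSpace Ω] {ℙ : Measure Ω} {Θ : Set ℝ} (hΘ : IsOpen Θ)
    (f f' : ℝ → Ω → ℝ)
    (hd : ∀ ω, ∀ s ∈ Θ, HasDerivAt (fun u => f u ω) (f' s ω) s)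
    (hm : ∀ s ∈ Θ, AEStronglyMeasurable (f s) ℙ) {s : ℝ} (hs : s ∈ Θ) :
    AEStronglyMeasurable (f' s) ℙ := by
  obtain ⟨δ, hδ, hball⟩ := Metric.isOpen_iff.mp hΘ s hs
  set u : ℕ → ℝ := fun n => s + δ / (n + 2) with hu
  have hpos : ∀ n : ℕ, 0 < δ / ((n : ℝ) + 2) := fun n => by positivity
  have hu_mem : ∀ n, u n ∈ Θ := by
    intro n
    apply hball
    simp only [hu, Metric.mem_ball, Real.dist_eq, add_sub_cancel_left]
    rw [abs_of_pos (hpos n)]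
    rw [div_lt_iff₀ (by positivity)]
    nlinarith [hδ]
  have hu_ne : ∀ n, u n ≠ s := fun n => by
    simp only [hu]; intro hcon; nlinarith [hpos n, hcon]
  have hu_tend : Tendsto u atTop (𝓝 s) := by
    have : Tendsto (fun n : ℕ => δ / ((n : ℝ) + 2)) atTop (𝓝 0) := by
      apply Tendsto.div_atTop tendsto_const_nhds
      exact tendsto_atTop_add_const_right _ 2 tendsto_natCast_atTop_atTop
    simpa [hu] using tendsto_const_nhds.add this
  have hmn : ∀ n : ℕ, AEStronglyMeasurable
      (fun ω => (f (u n) ω - f s ω) / (u n - s)) ℙ := fun n => by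
    simp only [div_eq_mul_inv]
    exact ((hm _ (hu_mem n)).sub (hm s hs)).mul_const _
  apply aestronglyMeasurable_of_tendsto_ae atTop hmn
  apply Eventually.of_forall
  intro ω
  have hda := (hd ω s hs)
  rw [hasDerivAt_iff_tendsto_slope] at hda
  have hts : Tendsto u atTop (𝓝[≠] s) :=
    tendsto_nhdsWithin_of_tendsto_nhds_of_eventually_within u hu_tend
      (Eventually.of_forall hu_ne)
  have := hda.comp hts
  refine this.congr fun n => ?_
  simp [Function.comp, slope_def_field, div_eq_mul_inv]

/-- `M` is twice continuously differentiable on `Θ` with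
`M''(t) = 2E[(∂φ_t⁻¹(X))²] - 2E[∂²φ_t⁻¹(X)(ε - φ_t⁻¹(X))]`, where `X = φ_θ(ε)`. -/
theorem M_twice_continuously_differentiable
    {Ω : Type*} [MeasurableSpace Ω] (ℙ : Measure Ω) [IsProbabilityMeasure ℙ]
    (ε : Ω → ℝ) (hε : Measurable ε)
    (Θ : Set ℝ) (hΘopen : IsOpen Θ) (θ : ℝ) (hθ : θ ∈ Θ)
    (φ ψ Dψ D2ψ : ℝ → ℝ → ℝ)
    (hψ : ∀ s ∈ Θ, ∀ x : ℝ, ψ s (φ s x) = x)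
    (hderiv : ∀ x : ℝ, ∀ s ∈ Θ, HasDerivAt (fun u => ψ u x) (Dψ s x) s)
    (hderiv2 : ∀ x : ℝ, ∀ s ∈ Θ, HasDerivAt (fun u => Dψ u x) (D2ψ s x) s)
    (hderiv2_cont : ∀ x : ℝ, ContinuousOn (fun s => D2ψ s x) Θ)
    (hL2 : ∀ s ∈ Θ, MemLp (fun ω => ψ s (φ θ (ε ω))) 2 ℙ) (hL2ε : MemLp ε 2 ℙ)
    (hsup4 : ∀ B : Set ℝ, B ⊆ Θ → IsCompact B →
      Integrable (fun ω => (⨆ s : B, |Dψ s (φ θ (ε ω))|) ^ 4) ℙ)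
    (hsup2 : ∀ B : Set ℝ, B ⊆ Θ → IsCompact B →
      Integrable (fun ω => (⨆ s : B, |D2ψ s (φ θ (ε ω))|) ^ 2) ℙ)
    (M M' M'' : ℝ → ℝ)
    (hM : ∀ s, M s = ∫ ω, (ψ s (φ θ (ε ω)) - ε ω) ^ 2 ∂ℙ)
    (hM' : ∀ s, M' s = -2 * ∫ ω, Dψ s (φ θ (ε ω)) * (ε ω - ψ s (φ θ (ε ω))) ∂ℙ)
    (hM'' : ∀ s, M'' s = 2 * (∫ ω, (Dψ s (φ θ (ε ω))) ^ 2 ∂ℙ) -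
      2 * ∫ ω, D2ψ s (φ θ (ε ω)) * (ε ω - ψ s (φ θ (ε ω))) ∂ℙ) :
    (∀ t ∈ Θ, HasDerivAt M (M' t) t) ∧ (∀ t ∈ Θ, HasDerivAt M' (M'' t) t) ∧
      ContinuousOn M'' Θ := by
  have hASMψ : ∀ s ∈ Θ, AEStronglyMeasurable (fun ω => ψ s (φ θ (ε ω))) ℙ :=
    fun s hs => (hL2 s hs).aestronglyMeasurable
  have hASMD : ∀ s ∈ Θ, AEStronglyMeasurable (fun ω => Dψ s (φ θ (ε ω))) ℙ :=
    fun s hs => aux_asm_deriv hΘopen (fun u ω => ψ u (φ θ (ε ω)))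
      (fun s ω => Dψ s (φ θ (ε ω))) (fun ω s hs' => hderiv _ s hs') hASMψ hs
  have hASMD2 : ∀ s ∈ Θ, AEStronglyMeasurable (fun ω => D2ψ s (φ θ (ε ω))) ℙ :=
    fun s hs => aux_asm_deriv hΘopen (fun u ω => Dψ u (φ θ (ε ω)))
      (fun s ω => D2ψ s (φ θ (ε ω))) (fun ω s hs' => hderiv2 _ s hs') hASMD hs
  have key : ∀ t ∈ Θ, HasDerivAt M (M' t) t ∧ HasDerivAt M' (M'' t) t ∧ ContinuousAt M'' t := by
    intro t ht
    obtain ⟨r, hr, hBΘ⟩ := (Metric.nhds_basis_closedBall.mem_iff).mp (hΘopen.mem_nhds ht)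
    set B : Set ℝ := Metric.closedBall t r with hBdef
    have hBc : IsCompact B := isCompact_closedBall t r
    have htB : t ∈ B := Metric.mem_closedBall_self hr.le
    set S₁ : Ω → ℝ := fun ω => ⨆ s : B, |Dψ s (φ θ (ε ω))| with hS₁def
    set S₂ : Ω → ℝ := fun ω => ⨆ s : B, |D2ψ s (φ θ (ε ω))| with hS₂def
    set A : Ω → ℝ := fun ω => |ε ω - ψ t (φ θ (ε ω))| with hAdef
    have hle₁ : ∀ ω, ∀ s ∈ B, |Dψ s (φ θ (ε ω))| ≤ S₁ ω := by
      intro ω s hs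
      have hcont : ContinuousOn (fun s => |Dψ s (φ θ (ε ω))|) B :=
        fun x hx => ((hderiv2 _ x (hBΘ hx)).continuousAt.continuousWithinAt).abs
      have hbdd : BddAbove (range fun s : B => |Dψ (s : ℝ) (φ θ (ε ω))|) := by
        have h := hBc.bddAbove_image hcont
        rwa [image_eq_range] at h
      exact le_ciSup hbdd ⟨s, hs⟩
    have hle₂ : ∀ ω, ∀ s ∈ B, |D2ψ s (φ θ (ε ω))| ≤ S₂ ω := by
      intro ω s hs
      have hcont : ContinuousOn (fun s => |D2ψ s (φ θ (ε ω))|) B :=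
        ((hderiv2_cont _).mono hBΘ).abs
      have hbdd : BddAbove (range fun s : B => |D2ψ (s : ℝ) (φ θ (ε ω))|) := by
        have h := hBc.bddAbove_image hcont
        rwa [image_eq_range] at h
      exact le_ciSup hbdd ⟨s, hs⟩
    have hS₁0 : ∀ ω, 0 ≤ S₁ ω := fun ω => (abs_nonneg _).trans (hle₁ ω t htB)
    have hS₂0 : ∀ ω, 0 ≤ S₂ ω := fun ω => (abs_nonneg _).trans (hle₂ ω t htB)
    have hS4 := hsup4 B hBΘ hBc
    have hS2 := hsup2 B hBΘ hBc
    have hS₁asm : AEStronglyMeasurable S₁ ℙ :=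
      aux_asm_of_pow (n := 4) (by norm_num) hS₁0 hS4.aestronglyMeasurable
    have hS₂asm : AEStronglyMeasurable S₂ ℙ :=
      aux_asm_of_pow (n := 2) (by norm_num) hS₂0 hS2.aestronglyMeasurable
    have hS₁sqInt : Integrable (fun ω => S₁ ω ^ 2) ℙ := by
      have hL : MemLp (fun ω => S₁ ω ^ 2) 2 ℙ := by
        refine (memLp_two_iff_integrable_sq ?_).2 ?_
        · exact hS₁asm.pow 2
        · have heq2 : (fun ω => (S₁ ω ^ 2) ^ 2) = fun ω => S₁ ω ^ 4 := by funext ω; ring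
          rw [heq2]; exact hS4
      exact hL.integrable one_le_two
    have hS₁L2 : MemLp S₁ 2 ℙ := (memLp_two_iff_integrable_sq hS₁asm).2 hS₁sqInt
    have hS₂L2 : MemLp S₂ 2 ℙ := (memLp_two_iff_integrable_sq hS₂asm).2 hS2
    have hdiffL2 : MemLp (fun ω => ε ω - ψ t (φ θ (ε ω))) 2 ℙ := hL2ε.sub (hL2 t ht)
    have hAL2 : MemLp A 2 ℙ := hdiffL2.abs
    have hDtL2 : MemLp (fun ω => Dψ t (φ θ (ε ω))) 2 ℙ := by
      refine hS₁L2.of_le (hASMD t ht) (ae_of_all _ fun ω => ?_)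
      rw [Real.norm_eq_abs, Real.norm_eq_abs, abs_of_nonneg (hS₁0 ω)]
      exact hle₁ ω t htB
    have hD2tL2 : MemLp (fun ω => D2ψ t (φ θ (ε ω))) 2 ℙ := by
      refine hS₂L2.of_le (hASMD2 t ht) (ae_of_all _ fun ω => ?_)
      rw [Real.norm_eq_abs, Real.norm_eq_abs, abs_of_nonneg (hS₂0 ω)]
      exact hle₂ ω t htB
    have int_Dψsq : Integrable (fun ω => (Dψ t (φ θ (ε ω))) ^ 2) ℙ :=
      (memLp_two_iff_integrable_sq (hASMD t ht)).1 hDtL2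
    have int_D2ψdiff : Integrable
        (fun ω => D2ψ t (φ θ (ε ω)) * (ε ω - ψ t (φ θ (ε ω)))) ℙ :=
      aux_mul_int hD2tL2 hdiffL2
    have int_Dψdiff : Integrable
        (fun ω => Dψ t (φ θ (ε ω)) * (ε ω - ψ t (φ θ (ε ω)))) ℙ :=
      aux_mul_int hDtL2 hdiffL2
    -- mean value bound
    have hψdist : ∀ ω, ∀ s ∈ B, |ψ s (φ θ (ε ω)) - ψ t (φ θ (ε ω))| ≤ S₁ ω * r := by
      intro ω s hs
      have hmvt := (convex_closedBall t r).norm_image_sub_le_of_norm_hasDerivWithin_le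
        (f := fun u => ψ u (φ θ (ε ω))) (f' := fun u => Dψ u (φ θ (ε ω)))
        (fun x hx => (hderiv _ x (hBΘ hx)).hasDerivWithinAt)
        (fun x hx => by rw [Real.norm_eq_abs]; exact hle₁ ω x hx) htB hs
      rw [Real.norm_eq_abs, Real.norm_eq_abs] at hmvt
      refine hmvt.trans ?_
      have hst : |s - t| ≤ r := by
        rw [← Real.dist_eq]; exact hs
      exact mul_le_mul_of_nonneg_left hst (hS₁0 ω)
    have hεψ : ∀ ω, ∀ s ∈ B, |ε ω - ψ s (φ θ (ε ω))| ≤ A ω + S₁ ω * r := by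
      intro ω s hs
      have h3 := abs_sub_le (ε ω) (ψ t (φ θ (ε ω))) (ψ s (φ θ (ε ω)))
      refine h3.trans (add_le_add le_rfl ?_)
      rw [abs_sub_comm]
      exact hψdist ω s hs
    -- first derivative
    have hMeq : M = fun s => ∫ ω, (ψ s (φ θ (ε ω)) - ε ω) ^ 2 ∂ℙ := funext hM
    have hM'eq : M' = fun s => ∫ ω, -2 * (Dψ s (φ θ (ε ω)) * (ε ω - ψ s (φ θ (ε ω)))) ∂ℙ := by
      funext s
      rw [hM' s, integral_const_mul]
    have hbound₁int : Integrable (fun ω => 2 * (S₁ ω * (A ω + S₁ ω * r))) ℙ := by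
      have heq : (fun ω => 2 * (S₁ ω * (A ω + S₁ ω * r)))
          = fun ω => 2 * (S₁ ω * A ω) + (2 * r) * S₁ ω ^ 2 := by funext ω; ring
      rw [heq]
      exact ((aux_mul_int hS₁L2 hAL2).const_mul 2).add (hS₁sqInt.const_mul (2 * r))
    have hd1 := hasDerivAt_integral_of_dominated_loc_of_deriv_le (μ := ℙ) (x₀ := t)
      (F := fun s ω => (ψ s (φ θ (ε ω)) - ε ω) ^ 2)
      (F' := fun s ω => -2 * (Dψ s (φ θ (ε ω)) * (ε ω - ψ s (φ θ (ε ω)))))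
      (bound := fun ω => 2 * (S₁ ω * (A ω + S₁ ω * r))) (ball_mem_nhds t hr)
      (eventually_of_mem (hΘopen.mem_nhds ht) fun s hs =>
        ((hASMψ s hs).sub hε.aestronglyMeasurable).pow 2)
      ((memLp_two_iff_integrable_sq ((hASMψ t ht).sub hε.aestronglyMeasurable)).1
        ((hL2 t ht).sub hL2ε))
      (((hASMD t ht).mul (hε.aestronglyMeasurable.sub (hASMψ t ht))).const_mul (-2))
      (ae_of_all _ fun ω => by
        intro s hs
        have hsB : s ∈ B := Metric.ball_subset_closedBall hs
        have h1 := hle₁ ω s hsB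
        have h2 := hεψ ω s hsB
        rw [Real.norm_eq_abs, abs_mul, abs_mul]
        have habs : |(-2 : ℝ)| = 2 := by norm_num
        rw [habs]
        have hmul := mul_le_mul h1 h2 (abs_nonneg _) (hS₁0 ω)
        beta_reduce
        linarith)
      hbound₁int
      (ae_of_all _ fun ω => by
        intro s hs
        have hsΘ : s ∈ Θ := hBΘ (Metric.ball_subset_closedBall hs)
        have h := ((hderiv (φ θ (ε ω)) s hsΘ).sub_const (ε ω)).pow 2
        refine h.congr_deriv ?_
        push_cast
        ring)
    have hDM : HasDerivAt M (M' t) t := by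
      rw [hMeq, hM' t, ← integral_const_mul]
      exact hd1.2
    -- second derivative
    have hbound₂int : Integrable (fun ω => 2 * (S₂ ω * (A ω + S₁ ω * r) + S₁ ω ^ 2)) ℙ := by
      have heq : (fun ω => 2 * (S₂ ω * (A ω + S₁ ω * r) + S₁ ω ^ 2))
          = fun ω => (2 * (S₂ ω * A ω) + (2 * r) * (S₂ ω * S₁ ω)) + 2 * S₁ ω ^ 2 := by
        funext ω; ring
      rw [heq]
      exact (((aux_mul_int hS₂L2 hAL2).const_mul 2).add
        ((aux_mul_int hS₂L2 hS₁L2).const_mul (2 * r))).add (hS₁sqInt.const_mul 2)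
    have hd2 := hasDerivAt_integral_of_dominated_loc_of_deriv_le (μ := ℙ) (x₀ := t)
      (F := fun s ω => -2 * (Dψ s (φ θ (ε ω)) * (ε ω - ψ s (φ θ (ε ω)))))
      (F' := fun s ω => -2 * (D2ψ s (φ θ (ε ω)) * (ε ω - ψ s (φ θ (ε ω)))
        - (Dψ s (φ θ (ε ω))) ^ 2))
      (bound := fun ω => 2 * (S₂ ω * (A ω + S₁ ω * r) + S₁ ω ^ 2)) (ball_mem_nhds t hr)
      (eventually_of_mem (hΘopen.mem_nhds ht) fun s hs =>
        (((hASMD s hs).mul (hε.aestronglyMeasurable.sub (hASMψ s hs))).const_mul (-2)))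
      (int_Dψdiff.const_mul (-2))
      ((((hASMD2 t ht).mul (hε.aestronglyMeasurable.sub (hASMψ t ht))).sub
        ((hASMD t ht).pow 2)).const_mul (-2))
      (ae_of_all _ fun ω => by
        intro s hs
        have hsB : s ∈ B := Metric.ball_subset_closedBall hs
        have h1 := hle₁ ω s hsB
        have h2 := hεψ ω s hsB
        have h3 := hle₂ ω s hsB
        rw [Real.norm_eq_abs, abs_mul]
        have habs : |(-2 : ℝ)| = 2 := by norm_num
        rw [habs]
        have htri : |D2ψ s (φ θ (ε ω)) * (ε ω - ψ s (φ θ (ε ω))) - (Dψ s (φ θ (ε ω))) ^ 2|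
            ≤ |D2ψ s (φ θ (ε ω))| * |ε ω - ψ s (φ θ (ε ω))| + |Dψ s (φ θ (ε ω))| ^ 2 := by
          calc _ ≤ |D2ψ s (φ θ (ε ω)) * (ε ω - ψ s (φ θ (ε ω)))| + |(Dψ s (φ θ (ε ω))) ^ 2| :=
                abs_sub _ _
            _ = _ := by rw [abs_mul, abs_pow]
        have hmul := mul_le_mul h3 h2 (abs_nonneg _) (hS₂0 ω)
        have hsq : |Dψ s (φ θ (ε ω))| ^ 2 ≤ S₁ ω ^ 2 :=
          pow_le_pow_left₀ (abs_nonneg _) h1 2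
        beta_reduce
        linarith)
      hbound₂int
      (ae_of_all _ fun ω => by
        intro s hs
        have hsΘ : s ∈ Θ := hBΘ (Metric.ball_subset_closedBall hs)
        have h := HasDerivAt.const_mul (-2 : ℝ)
          ((hderiv2 (φ θ (ε ω)) s hsΘ).mul
            ((hasDerivAt_const s (ε ω)).sub (hderiv (φ θ (ε ω)) s hsΘ)))
        simp only [Pi.sub_apply] at h
        refine h.congr_deriv ?_
        ring)
    have hint2 : (∫ ω, -2 * (D2ψ t (φ θ (ε ω)) * (ε ω - ψ t (φ θ (ε ω)))
        - (Dψ t (φ θ (ε ω))) ^ 2) ∂ℙ) = M'' t := by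
      rw [hM'' t, integral_const_mul, integral_sub int_D2ψdiff int_Dψsq]
      ring
    have hDM' : HasDerivAt M' (M'' t) t := by
      rw [hM'eq, ← hint2]
      exact hd2.2
    -- continuity of M''
    have hc1 : ContinuousAt (fun s => ∫ ω, (Dψ s (φ θ (ε ω))) ^ 2 ∂ℙ) t := by
      apply continuousAt_of_dominated (bound := fun ω => S₁ ω ^ 2)
      · exact eventually_of_mem (hΘopen.mem_nhds ht) fun s hs => (hASMD s hs).pow 2
      · filter_upwards [Metric.ball_mem_nhds t hr] with s hs
        apply ae_of_all
        intro ω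
        have h1 := hle₁ ω s (Metric.ball_subset_closedBall hs)
        rw [Real.norm_eq_abs, abs_pow]
        exact pow_le_pow_left₀ (abs_nonneg _) h1 2
      · exact hS₁sqInt
      · exact ae_of_all _ fun ω => ((hderiv2 _ t ht).continuousAt).pow 2
    have hc2 : ContinuousAt
        (fun s => ∫ ω, D2ψ s (φ θ (ε ω)) * (ε ω - ψ s (φ θ (ε ω))) ∂ℙ) t := by
      apply continuousAt_of_dominated (bound := fun ω => S₂ ω * (A ω + S₁ ω * r))
      · exact eventually_of_mem (hΘopen.mem_nhds ht) fun s hs =>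
          (hASMD2 s hs).mul (hε.aestronglyMeasurable.sub (hASMψ s hs))
      · filter_upwards [Metric.ball_mem_nhds t hr] with s hs
        apply ae_of_all
        intro ω
        have hsB : s ∈ B := Metric.ball_subset_closedBall hs
        rw [Real.norm_eq_abs, abs_mul]
        exact mul_le_mul (hle₂ ω s hsB) (hεψ ω s hsB) (abs_nonneg _) (hS₂0 ω)
      · have heq : (fun ω => S₂ ω * (A ω + S₁ ω * r))
            = fun ω => S₂ ω * A ω + r * (S₂ ω * S₁ ω) := by funext ω; ring
        rw [heq]
        exact (aux_mul_int hS₂L2 hAL2).add ((aux_mul_int hS₂L2 hS₁L2).const_mul r)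
      · refine ae_of_all _ fun ω => ?_
        exact (((hderiv2_cont _).continuousAt (hΘopen.mem_nhds ht)).mul
          (continuousAt_const.sub (hderiv _ t ht).continuousAt))
    have hM''eq : M'' = fun s => 2 * (∫ ω, (Dψ s (φ θ (ε ω))) ^ 2 ∂ℙ) -
        2 * ∫ ω, D2ψ s (φ θ (ε ω)) * (ε ω - ψ s (φ θ (ε ω))) ∂ℙ := funext hM''
    have hcM'' : ContinuousAt M'' t := by
      rw [hM''eq]
      exact (continuousAt_const.mul hc1).sub (continuousAt_const.mul hc2)
    exact ⟨hDM, hDM', hcM''⟩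
  exact ⟨fun t ht => (key t ht).1, fun t ht => (key t ht).2.1,
    fun t ht => ((key t ht).2.2).continuousWithinAt⟩
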